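/- Let (W,S) be a Coxeter system with generators s_i indexed by a set B. Let i_1,…,i_k ∈ B (k ≥ 2) be pairwise distinct indices such that s_{i_j} and s_{i_{j+1}} do not commute for each 1 ≤ j < k, while s_{i_j} and s_{i_l} commute whenever |j − l| ≥ 2 (so i_1,…,i_k are the vertices, in order, of a path in the Coxeter diagram). Then the word (i_k, i_1, i_2, …, i_k) is reduced; that is, ℓ( s_{i_k}·(s_{i_1}⋯s_{i_k}) ) = k + 1. -/

import Mathlib

open List Real

namespace PathReducedAux

variable {B : Type*}

/-! ### Geometric representation (used only for the parabolic support lemma) -/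

noncomputable def kf (M : CoxeterMatrix B) (a b : B) : ℝ := - Real.cos (Real.pi / (M a b))

lemma kf_diag (M : CoxeterMatrix B) (a : B) : kf M a a = 1 := by
  simp [kf, M.diagonal a]

lemma kf_symm (M : CoxeterMatrix B) (a b : B) : kf M a b = kf M b a := by
  simp [kf, M.symmetric a b]

/-- basis vector -/
noncomputable def ev (a : B) : B →₀ ℝ := Finsupp.single a 1

noncomputable def bform (M : CoxeterMatrix B) : (B →₀ ℝ) →ₗ[ℝ] (B →₀ ℝ) →ₗ[ℝ] ℝ :=
  Finsupp.linearCombination ℝ (fun a => Finsupp.linearCombination ℝ (kf M a))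

lemma bform_ev_ev (M : CoxeterMatrix B) (a b : B) : bform M (ev a) (ev b) = kf M a b := by
  simp [bform, ev, Finsupp.linearCombination_single]

lemma bform_ev_self (M : CoxeterMatrix B) (a : B) : bform M (ev a) (ev a) = 1 := by
  rw [bform_ev_ev, kf_diag]

/-- the reflection in the geometric representation -/
noncomputable def sref (M : CoxeterMatrix B) (a : B) : Module.End ℝ (B →₀ ℝ) :=
  LinearMap.id - (2:ℝ) • ((bform M (ev a)).smulRight (ev a))

lemma sref_apply (M : CoxeterMatrix B) (a : B) (v : B →₀ ℝ) :
    sref M a v = v - (2 * bform M (ev a) v) • ev a := by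
  simp [sref, LinearMap.smulRight_apply, smul_smul]

lemma bform_sref (M : CoxeterMatrix B) (a : B) (v : B →₀ ℝ) :
    bform M (ev a) (sref M a v) = - bform M (ev a) v := by
  rw [sref_apply]
  simp [map_sub, map_smul, bform_ev_self]
  ring

lemma sref_sref (M : CoxeterMatrix B) (a : B) (v : B →₀ ℝ) :
    sref M a (sref M a v) = v := by
  rw [sref_apply, bform_sref, sref_apply]
  module

lemma sref_fix {M : CoxeterMatrix B} {a : B} {v : B →₀ ℝ} (h : bform M (ev a) v = 0) :
    sref M a v = v := by
  rw [sref_apply, h]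
  simp

lemma pow_fix (f : Module.End ℝ (B →₀ ℝ)) (v : B →₀ ℝ) (h : f v = v) (n : ℕ) :
    (f ^ n) v = v := by
  induction n with
  | zero => simp
  | succ n ih => rw [pow_succ, Module.End.mul_apply, h, ih]

lemma sin_ident1 (θ a : ℝ) :
    (4 * Real.cos θ ^ 2 - 1) * Real.sin a - 2 * Real.cos θ * Real.sin (a - θ)
      = Real.sin (a + 2*θ) := by
  rw [Real.sin_sub, Real.sin_add, Real.cos_two_mul, Real.sin_two_mul]
  ring

lemma sin_ident2 (θ a : ℝ) :
    2 * Real.cos θ * Real.sin a - Real.sin (a - θ) = Real.sin (a + θ) := by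
  rw [Real.sin_sub, Real.sin_add]
  ring

theorem sref_braid (M : CoxeterMatrix B) (i j : B) :
    (sref M i * sref M j) ^ (M i j) = 1 := by
  rcases eq_or_ne i j with rfl | hij
  · rw [M.diagonal, pow_one]
    exact LinearMap.ext fun v => sref_sref M i v
  rcases Nat.eq_zero_or_pos (M i j) with h0 | hpos
  · rw [h0, pow_zero]
  have hm2 : 2 ≤ M i j := by
    have := M.off_diagonal i j hij
    omega
  set m : ℕ := M i j with hm
  have hmR : (2:ℝ) ≤ (m:ℝ) := by exact_mod_cast hm2
  have hm0 : (m:ℝ) ≠ 0 := by linarith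
  set θ : ℝ := Real.pi / m with hθ
  have hθpos : 0 < θ := div_pos Real.pi_pos (by linarith)
  have hθlt : θ < Real.pi := div_lt_self Real.pi_pos (by linarith)
  have hs : 0 < Real.sin θ := Real.sin_pos_of_pos_of_lt_pi hθpos hθlt
  set c : ℝ := Real.cos θ with hc
  have hmθ : (m:ℝ) * θ = Real.pi := by
    rw [hθ]
    field_simp
  have hbij : bform M (ev i) (ev j) = -c := by
    rw [bform_ev_ev]; rfl
  have hbji : bform M (ev j) (ev i) = -c := by
    rw [bform_ev_ev, kf_symm]; rfl
  set A := sref M i * sref M j with hA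
  have s_i_i : sref M i (ev i) = - ev i := by
    rw [sref_apply, bform_ev_self]; module
  have s_j_j : sref M j (ev j) = - ev j := by
    rw [sref_apply, bform_ev_self]; module
  have s_i_j : sref M i (ev j) = ev j + (2*c) • ev i := by
    rw [sref_apply, hbij]; module
  have s_j_i : sref M j (ev i) = ev i + (2*c) • ev j := by
    rw [sref_apply, hbji]; module
  have hAi : A (ev i) = (4*c^2-1) • ev i + (2*c) • ev j := by
    show sref M i (sref M j (ev i)) = _
    rw [s_j_i, map_add, map_smul, s_i_i, s_i_j]
    module
  have hAj : A (ev j) = (-(2*c)) • ev i + (-1 : ℝ) • ev j := by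
    show sref M i (sref M j (ev j)) = _
    rw [s_j_j, map_neg, s_i_j]
    module
  have key : ∀ r : ℕ,
      (A ^ r) (ev i) = (Real.sin ((2*(r:ℝ)+1)*θ)/Real.sin θ) • ev i
        + (Real.sin ((2*(r:ℝ))*θ)/Real.sin θ) • ev j
      ∧ (A ^ r) (ev j) = (-(Real.sin ((2*(r:ℝ))*θ)/Real.sin θ)) • ev i
        + (-(Real.sin ((2*(r:ℝ)-1)*θ)/Real.sin θ)) • ev j := by
    intro r
    induction r with
    | zero =>
      norm_num
      constructor
      · rw [div_self hs.ne']
        module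
      · rw [neg_div, div_self hs.ne']
        module
    | succ r ih =>
      obtain ⟨ih1, ih2⟩ := ih
      have S1 : Real.sin ((2*((r:ℝ)+1)+1)*θ)
          = (4*c^2-1) * Real.sin ((2*(r:ℝ)+1)*θ) - 2*c* Real.sin ((2*(r:ℝ))*θ) := by
        rw [show (2*((r:ℝ)+1)+1)*θ = (2*(r:ℝ)+1)*θ + 2*θ by ring,
          show (2*(r:ℝ))*θ = (2*(r:ℝ)+1)*θ - θ by ring]
        exact (sin_ident1 θ _).symm
      have S2 : Real.sin ((2*((r:ℝ)+1))*θ)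
          = 2*c* Real.sin ((2*(r:ℝ)+1)*θ) - Real.sin ((2*(r:ℝ))*θ) := by
        rw [show (2*((r:ℝ)+1))*θ = (2*(r:ℝ)+1)*θ + θ by ring,
          show (2*(r:ℝ))*θ = (2*(r:ℝ)+1)*θ - θ by ring]
        exact (sin_ident2 θ _).symm
      have S3 : Real.sin ((2*((r:ℝ)+1)-1)*θ)
          = 2*c* Real.sin ((2*(r:ℝ))*θ) - Real.sin ((2*(r:ℝ)-1)*θ) := by
        rw [show (2*((r:ℝ)+1)-1)*θ = (2*(r:ℝ))*θ + θ by ring,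
          show (2*(r:ℝ)-1)*θ = (2*(r:ℝ))*θ - θ by ring]
        exact (sin_ident2 θ _).symm
      have S4 : Real.sin ((2*((r:ℝ)+1))*θ)
          = (4*c^2-1) * Real.sin ((2*(r:ℝ))*θ) - 2*c* Real.sin ((2*(r:ℝ)-1)*θ) := by
        rw [show (2*((r:ℝ)+1))*θ = (2*(r:ℝ))*θ + 2*θ by ring,
          show (2*(r:ℝ)-1)*θ = (2*(r:ℝ))*θ - θ by ring]
        exact (sin_ident1 θ _).symm
      constructor
      · rw [pow_succ', Module.End.mul_apply, ih1, map_add, map_smul, map_smul, hAi, hAj]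
        push_cast
        rw [S1, S2]
        match_scalars
        · field_simp
          ring
        · field_simp
          ring
      · rw [pow_succ', Module.End.mul_apply, ih2, map_add, map_smul, map_smul, hAi, hAj]
        push_cast
        rw [S4, S3]
        match_scalars
        · field_simp
          ring
        · field_simp
          ring
  have hAmi : (A ^ m) (ev i) = ev i := by
    rw [(key m).1]
    rw [show (2*(m:ℝ)+1)*θ = θ + 2*Real.pi by linear_combination 2 * hmθ,
      show (2*(m:ℝ))*θ = 2*Real.pi by linear_combination 2 * hmθ,
      Real.sin_add_two_pi, Real.sin_two_pi, div_self hs.ne']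
    norm_num
  have hAmj : (A ^ m) (ev j) = ev j := by
    rw [(key m).2]
    rw [show (2*(m:ℝ))*θ = 2*Real.pi by linear_combination 2 * hmθ,
      show (2*(m:ℝ)-1)*θ = 2*Real.pi - θ by linear_combination 2 * hmθ,
      Real.sin_two_pi_sub, Real.sin_two_pi, neg_div, neg_neg, div_self hs.ne']
    norm_num
  apply LinearMap.ext
  intro v
  have hd : 1 - c^2 ≠ 0 := by
    have : Real.sin θ ^ 2 = 1 - c ^ 2 := Real.sin_sq θ
    nlinarith
  set Bi := bform M (ev i) v with hBi
  set Bj := bform M (ev j) v with hBj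
  set α : ℝ := (Bi + c*Bj)/(1-c^2) with hα
  set β : ℝ := (Bj + c*Bi)/(1-c^2) with hβ
  set w : B →₀ ℝ := v - α • ev i - β • ev j with hw
  have hwi : bform M (ev i) w = 0 := by
    rw [hw]
    simp only [map_sub, map_smul, bform_ev_self, hbij, smul_eq_mul]
    rw [← hBi, hα, hβ]
    field_simp
    ring
  have hwj : bform M (ev j) w = 0 := by
    rw [hw]
    simp only [map_sub, map_smul, bform_ev_self, hbji, smul_eq_mul]
    rw [← hBj, hα, hβ]
    field_simp
    ring
  have hAw : A w = w := by
    show sref M i (sref M j w) = w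
    rw [sref_fix hwj, sref_fix hwi]
  have hv : v = α • ev i + β • ev j + w := by rw [hw]; module
  rw [Module.End.one_apply, hv, map_add, map_add, map_smul, map_smul, hAmi, hAmj,
    pow_fix A w hAw]


/-! ### Lift to the Coxeter group and the support lemma -/

noncomputable def srefUnit (M : CoxeterMatrix B) (a : B) : (Module.End ℝ (B →₀ ℝ))ˣ where
  val := sref M a
  inv := sref M a
  val_inv := LinearMap.ext fun v => sref_sref M a v
  inv_val := LinearMap.ext fun v => sref_sref M a v

lemma srefUnit_liftable (M : CoxeterMatrix B) :
    CoxeterMatrix.IsLiftable M (srefUnit M) := by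
  intro i i'
  apply Units.ext
  rw [Units.val_pow_eq_pow_val, Units.val_mul]
  exact sref_braid M i i'

variable {W : Type*} [Group W] {M : CoxeterMatrix B} (cs : CoxeterSystem M W)

noncomputable def geomRep : W →* (Module.End ℝ (B →₀ ℝ))ˣ :=
  cs.lift ⟨srefUnit M, srefUnit_liftable M⟩

lemma geomRep_simple (a : B) : geomRep cs (cs.simple a) = srefUnit M a :=
  cs.lift_apply_simple (srefUnit_liftable M) a

lemma geomRep_coeff (σ : List B) (x : B) (h : ∀ b ∈ σ, b ≠ x) (v : B →₀ ℝ) :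
    ((geomRep cs (cs.wordProd σ)).val v) x = v x := by
  induction σ with
  | nil => simp
  | cons a τ ih =>
    have hax : a ≠ x := h a (List.mem_cons_self)
    have hτ : ∀ b ∈ τ, b ≠ x := fun b hb => h b (List.mem_cons_of_mem a hb)
    rw [cs.wordProd_cons, map_mul, Units.val_mul]
    have : ((srefUnit M a * geomRep cs (cs.wordProd τ)).val) v
        = sref M a (((geomRep cs (cs.wordProd τ)).val) v) := rfl
    rw [show ((geomRep cs (cs.simple a)).val * (geomRep cs (cs.wordProd τ)).val) v
        = (geomRep cs (cs.simple a)).val ((geomRep cs (cs.wordProd τ)).val v)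
        from rfl, geomRep_simple]
    show sref M a ((geomRep cs (cs.wordProd τ)).val v) x = v x
    rw [sref_apply, Finsupp.sub_apply, Finsupp.smul_apply, ev,
      Finsupp.single_eq_of_ne hax.symm, ih hτ]
    simp

/-- The key "parabolic support" lemma: a word avoiding the letter `x` cannot
have product `s x`. -/
lemma wordProd_ne_simple (σ : List B) (x : B) (h : ∀ b ∈ σ, b ≠ x) :
    cs.wordProd σ ≠ cs.simple x := by
  intro he
  have h1 := geomRep_coeff cs σ x h (ev x)
  rw [he, geomRep_simple] at h1
  have h2 : sref M x (ev x) (x) = (ev x) x := h1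
  rw [sref_apply, bform_ev_self, Finsupp.sub_apply, Finsupp.smul_apply] at h2
  have h3 : (ev x) x = 1 := by simp [ev]
  rw [h3] at h2
  norm_num at h2


/-! ### The reflection cocycle on `W × ZMod 2` -/

variable [DecidableEq W]

/-- parity count of occurrences -/
def cnt (t : W) : List W → ZMod 2
  | [] => 0
  | x :: l => (if x = t then 1 else 0) + cnt t l

lemma cnt_append (t : W) (l1 l2 : List W) : cnt t (l1 ++ l2) = cnt t l1 + cnt t l2 := by
  induction l1 with
  | nil => simp [cnt]
  | cons x l ih => simp [cnt, ih, add_assoc]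

lemma cnt_eq_zero_of_not_mem {t : W} {l : List W} (h : t ∉ l) : cnt t l = 0 := by
  induction l with
  | nil => rfl
  | cons x l ih =>
    have hx : x ≠ t := fun hx => h (hx ▸ List.mem_cons_self)
    have hl : t ∉ l := fun hl => h (List.mem_cons_of_mem x hl)
    simp [cnt, if_neg hx, ih hl]

def etaFun (i : B) : (W × ZMod 2) → (W × ZMod 2) :=
  fun p => (cs.simple i * p.1 * cs.simple i, p.2 + if p.1 = cs.simple i then 1 else 0)

lemma etaFun_invol (i : B) : Function.Involutive (etaFun cs i) := by
  rintro ⟨w, ε⟩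
  unfold etaFun
  have hfix : cs.simple i * (cs.simple i * w * cs.simple i) * cs.simple i = w := by
    simp [mul_assoc, cs.simple_mul_simple_cancel_left, cs.simple_mul_simple_self]
  have hcond : (cs.simple i * w * cs.simple i = cs.simple i) ↔ w = cs.simple i := by
    constructor
    · intro h
      have := congrArg (fun z => cs.simple i * z * cs.simple i) h
      rw [hfix] at this
      rw [this, mul_assoc, cs.simple_mul_simple_self, mul_one]
    · intro h
      rw [h, cs.simple_mul_simple_self, one_mul]
  simp only [hfix, hcond]
  rcases eq_or_ne w (cs.simple i) with h | h
  · simp [h, add_assoc, show (1+1 : ZMod 2) = 0 from rfl]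
  · simp [h]

noncomputable def eta (i : B) : Equiv.Perm (W × ZMod 2) :=
  (etaFun_invol cs i).toPerm

lemma eta_apply (i : B) (p : W × ZMod 2) : eta cs i p = etaFun cs i p := rfl

lemma ris_cons (a : B) (τ : List B) :
    cs.rightInvSeq (a :: τ)
      = ((cs.wordProd τ)⁻¹ * cs.simple a * cs.wordProd τ) :: cs.rightInvSeq τ := rfl

lemma eta_prod_apply (ω : List B) (t : W) (ε : ZMod 2) :
    ((ω.map (eta cs)).prod) (t, ε)
      = (cs.wordProd ω * t * (cs.wordProd ω)⁻¹, ε + cnt t (cs.rightInvSeq ω)) := by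
  induction ω with
  | nil => simp [cnt]
  | cons a τ ih =>
    rw [List.map_cons, List.prod_cons, Equiv.Perm.mul_apply, ih, eta_apply]
    unfold etaFun
    have hcond : (cs.wordProd τ * t * (cs.wordProd τ)⁻¹ = cs.simple a)
        ↔ ((cs.wordProd τ)⁻¹ * cs.simple a * cs.wordProd τ = t) := by
      constructor
      · intro h; rw [← h]; group
      · intro h; rw [← h]; group
    have h1 : cs.simple a * (cs.wordProd τ * t * (cs.wordProd τ)⁻¹) * cs.simple a
        = cs.wordProd (a :: τ) * t * (cs.wordProd (a :: τ))⁻¹ := by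
      rw [cs.wordProd_cons]
      rw [mul_inv_rev, cs.inv_simple]
      group
    rw [ris_cons, cnt]
    simp only [h1, hcond]
    congr 1
    ring

lemma prod_map_alt {G : Type*} [Monoid G] (f : B → G) (i i' : B) (q : ℕ) :
    ((CoxeterSystem.alternatingWord i i' (2*q)).map f).prod = (f i * f i') ^ q := by
  induction q with
  | zero => simp [CoxeterSystem.alternatingWord]
  | succ q ih =>
    have h1 : 2*(q+1) = (2*q+1)+1 := by ring
    rw [h1, CoxeterSystem.alternatingWord_succ', if_neg (by simp [Nat.even_add_one]),
      CoxeterSystem.alternatingWord_succ', if_pos (by simp [Nat.even_mul])]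
    rw [List.map_cons, List.map_cons, List.prod_cons, List.prod_cons, ih, pow_succ',
      mul_assoc]

lemma ris_alt (i i' : B) (n : ℕ) :
    cs.rightInvSeq (CoxeterSystem.alternatingWord i i' n)
      = (List.range n).reverse.map
          (fun l => (cs.wordProd (CoxeterSystem.alternatingWord i i' l))⁻¹
            * cs.wordProd (CoxeterSystem.alternatingWord i i' (l+1))) := by
  induction n with
  | zero => simp [CoxeterSystem.alternatingWord]
  | succ n ih =>
    rw [CoxeterSystem.alternatingWord_succ', ris_cons, ih, List.range_succ]
    simp only [List.reverse_append, List.reverse_cons, List.reverse_nil, List.nil_append,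
      List.cons_append, List.map_cons]
    congr 1
    have hpw : cs.wordProd (CoxeterSystem.alternatingWord i i' (n+1))
        = cs.simple (if Even n then i' else i)
          * cs.wordProd (CoxeterSystem.alternatingWord i i' n) := by
      rw [CoxeterSystem.alternatingWord_succ', cs.wordProd_cons]
    rw [hpw]
    group

lemma h_periodic (i i' : B) (l : ℕ) :
    (cs.wordProd (CoxeterSystem.alternatingWord i i' (l + M i i')))⁻¹
        * cs.wordProd (CoxeterSystem.alternatingWord i i' (l + M i i' + 1))
      = (cs.wordProd (CoxeterSystem.alternatingWord i i' l))⁻¹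
        * cs.wordProd (CoxeterSystem.alternatingWord i i' (l+1)) := by
  set m := M i i' with hm
  set u := cs.simple i * cs.simple i' with hu
  have hum : u ^ m = 1 := cs.simple_mul_simple_pow i i'
  have hsu : ∀ a : ℕ, cs.simple i' * u ^ a = (u ^ a)⁻¹ * cs.simple i' := by
    intro a
    have h1 : cs.simple i' * u * (cs.simple i')⁻¹ = u⁻¹ := by
      rw [cs.inv_simple, hu, mul_inv_rev, cs.inv_simple, cs.inv_simple]
      rw [mul_assoc (cs.simple i'), mul_assoc, cs.simple_mul_simple_self, mul_one]
    have h2 : cs.simple i' * u ^ a * (cs.simple i')⁻¹ = (u ^ a)⁻¹ := by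
      rw [← conj_pow, h1, inv_pow]
    calc cs.simple i' * u^a = (cs.simple i' * u^a * (cs.simple i')⁻¹) * cs.simple i' := by
          group
      _ = (u^a)⁻¹ * cs.simple i' := by rw [h2]
  have hF : ∀ a b x y : ℕ, x + y = m →
      (u^(a+x))⁻¹ * cs.simple i' * u^(b+y) = (u^a)⁻¹ * cs.simple i' * u^b := by
    intro a b x y hxy
    calc (u^(a+x))⁻¹ * cs.simple i' * u^(b+y)
        = (u^(a+x))⁻¹ * (cs.simple i' * u^y) * u^b := by
          rw [show b + y = y + b from Nat.add_comm b y, pow_add]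
          group
      _ = ((u^(a+x))⁻¹ * (u^y)⁻¹) * cs.simple i' * u^b := by rw [hsu y]; group
      _ = (u^(a+(x+y)))⁻¹ * cs.simple i' * u^b := by
          rw [← mul_inv_rev, ← pow_add, show y + (a+x) = a + (x+y) by omega]
      _ = (u^a)⁻¹ * cs.simple i' * u^b := by rw [hxy, pow_add, hum, mul_one]
  have hval : ∀ l : ℕ, (cs.wordProd (CoxeterSystem.alternatingWord i i' l))⁻¹
      * cs.wordProd (CoxeterSystem.alternatingWord i i' (l+1))
      = (u^(l/2))⁻¹ * cs.simple i' * u^((l+1)/2) := by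
    intro l
    rcases Nat.even_or_odd l with he | ho
    · obtain ⟨q, hq⟩ := he
      have hl : l = 2*q := by omega
      rw [hl, cs.prod_alternatingWord_eq_mul_pow, cs.prod_alternatingWord_eq_mul_pow,
        if_pos (by simp [Nat.even_mul]), if_neg (by simp [Nat.even_add_one, Nat.even_mul]),
        show (2*q)/2 = q by omega, show (2*q+1)/2 = q by omega]
      rw [← hu]
      group
    · obtain ⟨q, hq⟩ := ho
      rw [hq, cs.prod_alternatingWord_eq_mul_pow, cs.prod_alternatingWord_eq_mul_pow,
        if_neg (by simp [Nat.even_add_one, Nat.even_mul]),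
        if_pos (by refine ⟨q+1, by omega⟩),
        show (2*q+1)/2 = q by omega, show (2*q+1+1)/2 = q+1 by omega]
      rw [← hu, mul_inv_rev, cs.inv_simple]
      group
  rw [hval, hval]
  have e1 : (l + m)/2 = l/2 + ((l+m)/2 - l/2) := by omega
  have e2 : (l + m + 1)/2 = (l+1)/2 + ((l+m+1)/2 - (l+1)/2) := by omega
  rw [e1, e2]
  exact hF _ _ _ _ (by omega)

lemma ris_alt_sq (i i' : B) :
    cs.rightInvSeq (CoxeterSystem.alternatingWord i i' (2 * M i i'))
      = cs.rightInvSeq (CoxeterSystem.alternatingWord i i' (M i i'))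
        ++ cs.rightInvSeq (CoxeterSystem.alternatingWord i i' (M i i')) := by
  rw [ris_alt, ris_alt, two_mul, List.range_add, List.reverse_append, List.map_append]
  congr 1
  rw [List.map_reverse, List.map_map, ← List.map_reverse]
  apply List.map_congr_left
  intro l hl
  show (cs.wordProd (CoxeterSystem.alternatingWord i i' (M i i' + l)))⁻¹
      * cs.wordProd (CoxeterSystem.alternatingWord i i' (M i i' + l + 1)) = _
  rw [show M i i' + l = l + M i i' from Nat.add_comm _ _]
  exact h_periodic cs i i' l

lemma eta_liftable : CoxeterMatrix.IsLiftable M (fun i => eta cs i) := by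
  intro i i'
  apply Equiv.ext
  rintro ⟨t, ε⟩
  have h1 : ((eta cs i * eta cs i') ^ (M i i')) (t, ε)
      = ((CoxeterSystem.alternatingWord i i' (2 * M i i')).map (eta cs)).prod (t, ε) := by
    rw [prod_map_alt]
  have hw : cs.wordProd (CoxeterSystem.alternatingWord i i' (2 * M i i')) = 1 := by
    rw [cs.prod_alternatingWord_eq_mul_pow, if_pos ⟨M i i', two_mul _⟩, one_mul,
      show 2 * M i i' / 2 = M i i' by omega, cs.simple_mul_simple_pow]
  have hz : ∀ z : ZMod 2, z + z = 0 := by decide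
  rw [Equiv.Perm.one_apply, h1, eta_prod_apply, hw, ris_alt_sq, cnt_append, hz]
  simp

noncomputable def theta : W →* Equiv.Perm (W × ZMod 2) :=
  cs.lift ⟨fun i => eta cs i, eta_liftable cs⟩

lemma theta_simple (i : B) : theta cs (cs.simple i) = eta cs i :=
  cs.lift_apply_simple (eta_liftable cs) i

lemma theta_wordProd (ω : List B) :
    theta cs (cs.wordProd ω) = (ω.map (eta cs)).prod := by
  induction ω with
  | nil => simp
  | cons a τ ih =>
    rw [cs.wordProd_cons, map_mul, theta_simple, List.map_cons, List.prod_cons, ih]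

/-- The cocycle value. -/
noncomputable def nf (w t : W) : ZMod 2 := ((theta cs w) (t, 0)).2

lemma nf_wordProd (ω : List B) (t : W) :
    nf cs (cs.wordProd ω) t = cnt t (cs.rightInvSeq ω) := by
  unfold nf
  rw [theta_wordProd, eta_prod_apply]
  simp

lemma theta_apply (w t : W) (ε : ZMod 2) :
    theta cs w (t, ε) = (w * t * w⁻¹, ε + nf cs w t) := by
  obtain ⟨ω, rfl⟩ := cs.wordProd_surjective w
  rw [theta_wordProd, eta_prod_apply, nf_wordProd]

lemma nf_mul (u v t : W) : nf cs (u * v) t = nf cs v t + nf cs u (v * t * v⁻¹) := by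
  show ((theta cs (u * v)) (t, 0)).2 = _
  rw [map_mul, Equiv.Perm.mul_apply, theta_apply cs v t 0,
    theta_apply cs u (v * t * v⁻¹) (0 + nf cs v t)]
  simp [add_assoc]

lemma nf_simple (i : B) (t : W) :
    nf cs (cs.simple i) t = if t = cs.simple i then 1 else 0 := by
  show ((theta cs (cs.simple i)) (t, 0)).2 = _
  rw [theta_simple, eta_apply]
  unfold etaFun
  simp

lemma length_lt_of_nf_one {w t : W} (h : nf cs w t = 1) :
    cs.length (w * t) < cs.length w := by
  obtain ⟨ω, hl, hw⟩ := cs.exists_reduced_word w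
  rw [hw, nf_wordProd] at h
  have hmem : t ∈ cs.rightInvSeq ω := by
    by_contra hn
    rw [cnt_eq_zero_of_not_mem hn] at h
    exact absurd h (by decide)
  obtain ⟨j, hj, hjt⟩ := List.getElem_of_mem hmem
  have hj' : j < ω.length := by simpa using hj
  have hprod : cs.wordProd ω * t = cs.wordProd (ω.eraseIdx j) := by
    rw [← hjt, ← List.getD_eq_getElem _ 1 hj]
    exact cs.wordProd_mul_getD_rightInvSeq ω j
  rw [hw, hprod]
  calc cs.length (cs.wordProd (ω.eraseIdx j)) ≤ (ω.eraseIdx j).length :=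
        cs.length_wordProd_le _
    _ < ω.length := by have := List.length_eraseIdx_add_one hj'; omega
    _ = cs.length (cs.wordProd ω) := by rw [← hw]; rw [hw]; exact hl.eq.symm

lemma length_mul_simple_of_nf_zero {w : W} {i : B} (h : nf cs w (cs.simple i) = 0) :
    cs.length (w * cs.simple i) = cs.length w + 1 := by
  rcases cs.length_mul_simple w i with he | he
  · exact he
  · exfalso
    have hww : (w * cs.simple i) * cs.simple i = w := cs.simple_mul_simple_cancel_right i
    have h0 : nf cs (w * cs.simple i) (cs.simple i) = 0 := by
      rcases (show ∀ z : ZMod 2, z = 0 ∨ z = 1 by decide)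
          (nf cs (w * cs.simple i) (cs.simple i)) with hz | hz
      · exact hz
      · exfalso
        have hlt := length_lt_of_nf_one cs hz
        rw [hww] at hlt
        omega
    have h1 : nf cs w (cs.simple i) = 1 := by
      conv_lhs => rw [← hww]
      rw [nf_mul, nf_simple, if_pos rfl,
        show cs.simple i * cs.simple i * (cs.simple i)⁻¹ = cs.simple i by group, h0, add_zero]
    rw [h1] at h
    exact absurd h (by decide)

end PathReducedAux

open PathReducedAux

/-- Let `(W, S)` be a Coxeter system with generators indexed by `B`. Let
`ω = (i₁, …, i_k)` (with `k ≥ 2`) be a list of pairwise distinct indices such that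
consecutive generators do not commute while generators at distance at least `2` commute
(so `i₁, …, i_k` are the vertices, in order, of a path in the Coxeter diagram). Then the
word `(i_k, i₁, i₂, …, i_k)` is reduced; that is, `ℓ(s_{i_k} · (s_{i₁} ⋯ s_{i_k})) = k + 1`. -/
theorem path_word_prepend_last_reduced
    {B : Type*} {W : Type*} [Group W] {M : CoxeterMatrix B} (cs : CoxeterSystem M W)
    (ω : List B) (hne : ω ≠ []) (hk : 2 ≤ ω.length) (hnodup : ω.Nodup)
    (hchain : List.Chain' (fun a b => ¬ Commute (cs.simple a) (cs.simple b)) ω)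
    (hfar : ∀ j l : Fin ω.length, j.1 + 2 ≤ l.1 →
      Commute (cs.simple (ω.get j)) (cs.simple (ω.get l))) :
    cs.length (cs.wordProd (ω.getLast hne :: ω)) = ω.length + 1 := by
  classical
  set k := ω.length with hkdef
  have hmem_ne : ∀ (j : ℕ) (hj : j < k), ∀ b : B, b ∈ ω.take j → b ≠ ω[j]'(hkdef ▸ hj) := by
    intro j hj b hb heq
    have hdis : List.Disjoint (ω.take j) (ω.drop j) := by
      apply List.disjoint_of_nodup_append
      rw [List.take_append_drop]
      exact hnodup
    have hj' : ω[j] ∈ ω.drop j := by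
      rw [← List.getElem_cons_drop hj]
      exact List.mem_cons_self
    exact hdis (heq ▸ hb) hj'
  have htake_idx : ∀ (n : ℕ) (b : B), b ∈ ω.take n →
      ∃ c : ℕ, ∃ hc : c < k, c < n ∧ ω[c]'(by omega) = b := by
    intro n b hb
    obtain ⟨c, hc, hcb⟩ := List.mem_iff_getElem.mp hb
    have hck : c < k := by
      simp only [List.length_take] at hc
      omega
    have hcn : c < n := by
      simp only [List.length_take] at hc
      omega
    refine ⟨c, hck, hcn, ?_⟩
    rw [← hcb]
    exact List.getElem_take.symm
  have hL : ω.getLast hne = ω[k-1]'(by omega) := List.getLast_eq_getElem hne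
  have main : ∀ j : ℕ, j ≤ k →
      cs.length (cs.wordProd (ω.getLast hne :: ω.take j)) = j + 1 := by
    intro j
    induction j with
    | zero =>
      intro _
      rw [List.take_zero, cs.wordProd_singleton, cs.length_simple]
    | succ j ih =>
      intro hjk
      have hj : j < k := by omega
      have hstep : ω.take (j+1) = ω.take j ++ [ω[j]'(by omega)] := by
        rw [List.take_succ, List.getElem?_eq_getElem hj]
        rfl
      have hsplit : cs.wordProd (ω.getLast hne :: ω.take (j+1))
          = cs.wordProd (ω.getLast hne :: ω.take j) * cs.simple (ω[j]'(by omega)) := by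
        rw [hstep,
          show ω.getLast hne :: (ω.take j ++ [ω[j]'(by omega)])
            = (ω.getLast hne :: ω.take j) ++ [ω[j]'(by omega)] from rfl,
          cs.wordProd_append, cs.wordProd_singleton]
      have hnotmem : cs.simple (ω[j]'(by omega))
          ∉ cs.rightInvSeq (ω.getLast hne :: ω.take j) := by
        intro hmem
        rw [ris_cons] at hmem
        rcases List.mem_cons.mp hmem with he0 | htail
        · -- head entry
          by_cases hjlast : j = k - 1
          · -- commutation contradiction
            subst hjlast
            rw [hL] at he0
            have hk2 : k - 2 < k := by omega
            have hsplit2 : ω.take (k-1) = ω.take (k-2) ++ [ω[k-2]'(by omega)] := by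
              rw [show k - 1 = (k-2) + 1 by omega, List.take_succ,
                List.getElem?_eq_getElem hk2]
              rfl
            have hcomm0 : cs.simple (ω[k-1]'(by omega)) * cs.wordProd (ω.take (k-1))
                = cs.wordProd (ω.take (k-1)) * cs.simple (ω[k-1]'(by omega)) := by
              calc cs.simple (ω[k-1]'(by omega)) * cs.wordProd (ω.take (k-1))
                  = cs.wordProd (ω.take (k-1))
                    * ((cs.wordProd (ω.take (k-1)))⁻¹ * cs.simple (ω[k-1]'(by omega))
                      * cs.wordProd (ω.take (k-1))) := by group
                _ = _ := by rw [← he0]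
            have hcommlist : ∀ x ∈ List.map cs.simple (ω.take (k-2)),
                Commute x (cs.simple (ω[k-1]'(by omega))) := by
              intro x hx
              obtain ⟨b, hb, rfl⟩ := List.mem_map.mp hx
              obtain ⟨c, hck, hcn, hcb⟩ := htake_idx (k-2) b hb
              rw [← hcb]
              have := hfar ⟨c, by omega⟩ ⟨k-1, by omega⟩ (by simp; omega)
              simpa [List.get_eq_getElem] using this
            have hprod_comm : cs.wordProd (ω.take (k-2)) * cs.simple (ω[k-1]'(by omega))
                = cs.simple (ω[k-1]'(by omega)) * cs.wordProd (ω.take (k-2)) :=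
              Commute.list_prod_left (List.map cs.simple (ω.take (k-2)))
                (cs.simple (ω[k-1]'(by omega))) hcommlist
            rw [hsplit2, cs.wordProd_append, cs.wordProd_singleton] at hcomm0
            have hyL : cs.simple (ω[k-1]'(by omega)) * cs.simple (ω[k-2]'hk2)
                = cs.simple (ω[k-2]'hk2) * cs.simple (ω[k-1]'(by omega)) := by
              have h5 : cs.wordProd (ω.take (k-2))
                    * (cs.simple (ω[k-1]'(by omega)) * cs.simple (ω[k-2]'hk2))
                  = cs.wordProd (ω.take (k-2))
                    * (cs.simple (ω[k-2]'hk2) * cs.simple (ω[k-1]'(by omega))) := by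
                calc cs.wordProd (ω.take (k-2))
                      * (cs.simple (ω[k-1]'(by omega)) * cs.simple (ω[k-2]'hk2))
                    = (cs.wordProd (ω.take (k-2)) * cs.simple (ω[k-1]'(by omega)))
                      * cs.simple (ω[k-2]'hk2) := by group
                  _ = (cs.simple (ω[k-1]'(by omega)) * cs.wordProd (ω.take (k-2)))
                      * cs.simple (ω[k-2]'hk2) := by rw [hprod_comm]
                  _ = cs.simple (ω[k-1]'(by omega))
                      * (cs.wordProd (ω.take (k-2)) * cs.simple (ω[k-2]'hk2)) := by group
                  _ = _ := by rw [hcomm0]; group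
              exact mul_left_cancel h5
            have hch := List.isChain_iff_getElem.mp hchain (k-2)
              (by simp only [← hkdef]; omega)
            have hidx : k - 2 + 1 = k - 1 := by omega
            simp only [hidx] at hch
            exact hch hyL.symm
          · -- support contradiction
            have hjne : (k : ℕ) - 1 ≠ j := fun h => hjlast h.symm
            have hval : cs.wordProd ((ω.take j).reverse ++ (ω.getLast hne) :: ω.take j)
                = (cs.wordProd (ω.take j))⁻¹ * cs.simple (ω.getLast hne)
                  * cs.wordProd (ω.take j) := by
              rw [cs.wordProd_append, cs.wordProd_reverse, cs.wordProd_cons, mul_assoc]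
            refine wordProd_ne_simple cs ((ω.take j).reverse ++ (ω.getLast hne) :: ω.take j)
              (ω[j]'(by omega)) ?_ ?_
            · intro b hb
              rcases List.mem_append.mp hb with h1 | h2
              · exact hmem_ne j hj b (List.mem_reverse.mp h1)
              · rcases List.mem_cons.mp h2 with h3 | h4
                · rw [h3, hL]
                  intro hEq
                  have : k - 1 = j := (List.Nodup.getElem_inj_iff hnodup).mp hEq
                  exact hjne this
                · exact hmem_ne j hj b h4
            · rw [hval]
              exact he0.symm
        · -- tail entry
          obtain ⟨l, hl, hlt⟩ := List.getElem_of_mem htail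
          have hlj : l < j := by
            have := hl
            simp only [CoxeterSystem.length_rightInvSeq, List.length_take] at this
            omega
          have hlτ : l < (ω.take j).length := by
            simp only [List.length_take]
            omega
          have hentry : (cs.rightInvSeq (ω.take j)).getD l 1 = cs.simple (ω[j]'(by omega)) := by
            rw [List.getD_eq_getElem _ 1 hl, hlt]
          rw [cs.getD_rightInvSeq, List.getElem?_eq_getElem hlτ] at hentry
          simp only [Option.map_some, Option.getD_some] at hentry
          have hval : cs.wordProd (((ω.take j).drop (l+1)).reverse
                ++ ((ω.take j)[l]'hlτ) :: (ω.take j).drop (l+1))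
              = (cs.wordProd ((ω.take j).drop (l+1)))⁻¹ * cs.simple ((ω.take j)[l]'hlτ)
                * cs.wordProd ((ω.take j).drop (l+1)) := by
            rw [cs.wordProd_append, cs.wordProd_reverse, cs.wordProd_cons, mul_assoc]
          refine wordProd_ne_simple cs _ (ω[j]'(by omega)) ?_ (by rw [hval]; exact hentry)
          intro b hb
          rcases List.mem_append.mp hb with h1 | h2
          · exact hmem_ne j hj b (List.mem_of_mem_drop (List.mem_reverse.mp h1))
          · rcases List.mem_cons.mp h2 with h3 | h4
            · rw [h3]
              exact hmem_ne j hj _ (List.getElem_mem _)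
            · exact hmem_ne j hj b (List.mem_of_mem_drop h4)
      have hnf : nf cs (cs.wordProd (ω.getLast hne :: ω.take j))
          (cs.simple (ω[j]'(by omega))) = 0 := by
        rw [nf_wordProd, cnt_eq_zero_of_not_mem hnotmem]
      rw [hsplit, length_mul_simple_of_nf_zero cs hnf, ih (by omega)]
  have hfin := main k (le_refl k)
  rw [hkdef, List.take_length] at hfin
  exact hfin
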